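/- Let d ≥ 1 and k ≥ 1 be natural numbers and let A, B be d×d complex matrices with A invertible, B·A⁻¹·Bᵀ = 0, and Bᵀ·A⁻¹·B = 0. Let H be the (kd)×(kd) block-tridiagonal matrix with k diagonal blocks equal to A, with B in every block directly above the diagonal and Bᵀ in every block directly below the diagonal, and zero blocks elsewhere; that is, indexing blocks by i, j ∈ {1,…,k}, the (i,j) block of H equals A if i = j, equals B if j = i+1, equals Bᵀ if i = j+1, and is 0 otherwise. Then det(H) = (det A)ᵏ. -/
import Mathlib
open Matrix

lemma statement9_aux (d : ℕ) (A B : Matrix (Fin d) (Fin d) ℂ) (hA : IsUnit A)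
    (h1 : B * A⁻¹ * Bᵀ = 0) :
    ∀ (k : ℕ) (H : Matrix (Fin k × Fin d) (Fin k × Fin d) ℂ),
      (∀ (i j : Fin k) (a b : Fin d), H (i, a) (j, b) =
        if i = j then A a b
        else if (j : ℕ) = (i : ℕ) + 1 then B a b
        else if (i : ℕ) = (j : ℕ) + 1 then Bᵀ a b
        else 0) →
      H.det = A.det ^ k := by
  intro k
  induction k with
  | zero => intro H _; simp [Matrix.det_isEmpty]
  | succ k ih =>
    intro H hH
    haveI : Invertible A := hA.invertible
    set e : (Fin k × Fin d) ⊕ Fin d ≃ Fin (k + 1) × Fin d :=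
      (Equiv.sumCongr (Equiv.refl _) (Equiv.uniqueProd (Fin d) (Fin 1)).symm).trans
        (((Equiv.sumProdDistrib (Fin k) (Fin 1) (Fin d)).symm).trans
          (Equiv.prodCongr finSumFinEquiv (Equiv.refl _))) with he
    have hel : ∀ (i : Fin k) (a : Fin d), e (Sum.inl (i, a)) = (Fin.castAdd 1 i, a) := by
      intro i a; rfl
    have her : ∀ (a : Fin d), e (Sum.inr a) = (Fin.natAdd k 0, a) := by
      intro a; rfl
    rw [← Matrix.det_submatrix_equiv_self e H,
        ← Matrix.fromBlocks_toBlocks (H.submatrix e e)]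
    have h22 : (H.submatrix e e).toBlocks₂₂ = A := by
      ext a b
      simp [Matrix.toBlocks₂₂, Matrix.submatrix_apply, her, hH]
    have h12 : ∀ (p : Fin k × Fin d) (b : Fin d),
        (H.submatrix e e).toBlocks₁₂ p b = if k = (p.1 : ℕ) + 1 then B p.2 b else 0 := by
      rintro ⟨i, a⟩ b
      simp only [Matrix.toBlocks₁₂, Matrix.submatrix_apply, hel, her, Matrix.of_apply]
      rw [hH]
      have h1' : ¬ (Fin.castAdd 1 i = (Fin.natAdd k 0 : Fin (k+1))) := by
        simp [Fin.ext_iff]; omega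
      have : ((Fin.natAdd k 0 : Fin (k+1)) : ℕ) = k := by simp
      simp only [h1', if_false, this, Fin.coe_castAdd]
      have h3' : ¬ ((i : ℕ) = k + 1) := by omega
      simp [h3']
    have h21 : ∀ (a : Fin d) (q : Fin k × Fin d),
        (H.submatrix e e).toBlocks₂₁ a q = if k = (q.1 : ℕ) + 1 then Bᵀ a q.2 else 0 := by
      rintro a ⟨j, b⟩
      simp only [Matrix.toBlocks₂₁, Matrix.submatrix_apply, hel, her, Matrix.of_apply]
      rw [hH]
      have h1' : ¬ ((Fin.natAdd k 0 : Fin (k+1)) = Fin.castAdd 1 j) := by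
        simp [Fin.ext_iff]; omega
      have hk' : ((Fin.natAdd k 0 : Fin (k+1)) : ℕ) = k := by simp
      simp only [h1', if_false, hk', Fin.coe_castAdd]
      have h3' : ¬ ((j : ℕ) = k + 1) := by omega
      simp [h3', eq_comm]
    rw [h22, Matrix.det_fromBlocks₂₂]
    have hz : (H.submatrix e e).toBlocks₁₂ * ⅟A * (H.submatrix e e).toBlocks₂₁ = 0 := by
      rw [Matrix.invOf_eq_nonsing_inv]
      ext p q
      simp only [Matrix.mul_apply, Matrix.zero_apply]
      by_cases hp : k = (p.1 : ℕ) + 1 <;> by_cases hq : k = (q.1 : ℕ) + 1 <;>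
        simp [h12, h21, hp, hq, Finset.sum_mul, Finset.mul_sum]
      all_goals intro hpq
      all_goals try (exfalso; omega)
      have hz0 : (B * A⁻¹ * Bᵀ) p.2 q.2 = (0 : Matrix (Fin d) (Fin d) ℂ) p.2 q.2 := by
        rw [h1]
      simpa [Matrix.mul_apply, Finset.sum_mul, Finset.mul_sum] using hz0
    rw [hz, sub_zero]
    have hdet1 : (H.submatrix e e).toBlocks₁₁.det = A.det ^ k := by
      apply ih
      intro i j a b
      simp only [Matrix.toBlocks₁₁, Matrix.submatrix_apply, hel, Matrix.of_apply]
      rw [hH]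
      simp [Fin.ext_iff]
    rw [hdet1]
    ring

/-- Let `A, B` be `d×d` complex matrices with `A` invertible,
`B A⁻¹ Bᵀ = 0` and `Bᵀ A⁻¹ B = 0`.  If `H` is the `(kd)×(kd)` block-tridiagonal matrix
with diagonal blocks `A`, superdiagonal blocks `B`, subdiagonal blocks `Bᵀ` and zero
blocks elsewhere, then `det H = (det A)ᵏ`. -/
theorem statement9 (d k : ℕ) (hd : 1 ≤ d) (hk : 1 ≤ k)
    (A B : Matrix (Fin d) (Fin d) ℂ) (hA : IsUnit A)
    (h1 : B * A⁻¹ * Bᵀ = 0) (h2 : Bᵀ * A⁻¹ * B = 0)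
    (H : Matrix (Fin k × Fin d) (Fin k × Fin d) ℂ)
    (hH : ∀ (i j : Fin k) (a b : Fin d), H (i, a) (j, b) =
      if i = j then A a b
      else if (j : ℕ) = (i : ℕ) + 1 then B a b
      else if (i : ℕ) = (j : ℕ) + 1 then Bᵀ a b
      else 0) :
    H.det = A.det ^ k :=
  statement9_aux d A B hA h1 k H hH
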